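/- If a > b > r ≥ |z| for complex z and real a, b, r, and λ ∈ [0,1], then |z/(b-z) - λ·z/(a-z)| ≤ r/(b-r) - λ·r/(a-r). -/

import Mathlib

theorem stmt_0 (z : ℂ) (a b r lam : ℝ) (hr : 0 < r) (hab : b < a) (hbr : r < b)
    (hz : ‖z‖ ≤ r) (hlam : lam ∈ Set.Icc (0:ℝ) 1) :
    ‖z / ((b:ℂ) - z) - (lam:ℂ) * (z / ((a:ℂ) - z))‖ ≤
      r / (b - r) - lam * (r / (a - r)) := by
  obtain ⟨hl0, hl1⟩ := hlam
  have hra : r < a := hbr.trans hab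
  have hbz : b - r ≤ ‖(b:ℂ) - z‖ := by
    have := norm_sub_norm_le (b:ℂ) z
    rw [Complex.norm_real, Real.norm_eq_abs] at this
    have : b - r ≤ |b| - ‖z‖ := by
      rw [abs_of_pos (hr.trans hbr)]; linarith
    linarith [norm_sub_norm_le (b:ℂ) z, Complex.norm_real b, Real.norm_eq_abs b]
  have haz : a - r ≤ ‖(a:ℂ) - z‖ := by
    have h1 := norm_sub_norm_le (a:ℂ) z
    rw [Complex.norm_real, Real.norm_eq_abs, abs_of_pos (hr.trans hra)] at h1
    linarith
  have hbz0 : ((b:ℂ) - z) ≠ 0 := by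
    intro h; rw [h] at hbz; simp at hbz; linarith
  have haz0 : ((a:ℂ) - z) ≠ 0 := by
    intro h; rw [h] at haz; simp at haz; linarith
  have key : z / ((b:ℂ) - z) - (lam:ℂ) * (z / ((a:ℂ) - z)) =
      (1 - (lam:ℂ)) * (z / ((b:ℂ) - z)) +
        (lam:ℂ) * (z * ((a:ℂ) - b) / (((b:ℂ) - z) * ((a:ℂ) - z))) := by
    field_simp
    ring
  rw [key]
  have hbzpos : (0:ℝ) < b - r := by linarith
  have hazpos : (0:ℝ) < a - r := by linarith
  have h1 : ‖(1 - (lam:ℂ)) * (z / ((b:ℂ) - z))‖ ≤ (1 - lam) * (r / (b - r)) := by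
    rw [norm_mul, norm_div]
    have : ‖1 - (lam:ℂ)‖ = 1 - lam := by
      rw [show (1 - (lam:ℂ)) = ((1 - lam : ℝ) : ℂ) by push_cast; ring,
        Complex.norm_real, Real.norm_eq_abs, abs_of_nonneg (by linarith)]
    rw [this]
    gcongr
  have h2 : ‖(lam:ℂ) * (z * ((a:ℂ) - b) / (((b:ℂ) - z) * ((a:ℂ) - z)))‖ ≤
      lam * (r * (a - b) / ((b - r) * (a - r))) := by
    rw [norm_mul, norm_div, norm_mul, norm_mul, Complex.norm_real, Real.norm_eq_abs, abs_of_nonneg hl0]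
    have hab' : ‖(a:ℂ) - (b:ℂ)‖ = a - b := by
      rw [show ((a:ℂ) - b) = ((a - b : ℝ) : ℂ) by push_cast; ring,
        Complex.norm_real, Real.norm_eq_abs, abs_of_nonneg (by linarith)]
    rw [hab']
    gcongr
    all_goals nlinarith
  calc ‖(1 - (lam:ℂ)) * (z / ((b:ℂ) - z)) +
        (lam:ℂ) * (z * ((a:ℂ) - b) / (((b:ℂ) - z) * ((a:ℂ) - z)))‖
      ≤ ‖(1 - (lam:ℂ)) * (z / ((b:ℂ) - z))‖ +
        ‖(lam:ℂ) * (z * ((a:ℂ) - b) / (((b:ℂ) - z) * ((a:ℂ) - z)))‖ :=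
        norm_add_le _ _
    _ ≤ (1 - lam) * (r / (b - r)) + lam * (r * (a - b) / ((b - r) * (a - r))) := by
        linarith
    _ = r / (b - r) - lam * (r / (a - r)) := by field_simp; ring
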